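/- The two-dimensional subspace of ℂ⁴ ⊗ ℂ² spanned by Ψ_1 = (1/√2)(ξ_0⊗|0⟩ + ξ_1⊗|1⟩) and Ψ_2 = (1/√2)(ξ_2⊗|0⟩ + ξ_3⊗|1⟩), where {ξ_0,ξ_1,ξ_2,ξ_3} is an orthonormal basis of ℂ⁴, satisfies: the eight vectors (I⊗L_k)Ψ_l for k ∈ {1,2,3,4}, l ∈ {1,2} are pairwise orthogonal, each of squared norm 1/4, where L_k are the explicit Kraus operators. -/

import Mathlib

open Complex Matrix BigOperators

noncomputable def L : Fin 4 → Matrix (Fin 2) (Fin 2) ℂ :=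
  ![ (1/4 : ℂ) • !![2, 1 - I; 1 + I, 0],
     (1/4 : ℂ) • !![2, -1 + I; -1 - I, 0],
     (1/4 : ℂ) • !![0, 1 + I; 1 - I, 2],
     (1/4 : ℂ) • !![0, -1 - I; -1 + I, 2] ]

/-- Hermitian inner product, conjugate-linear in the first argument. -/
noncomputable def inn {ι : Type*} [Fintype ι] (x y : ι → ℂ) : ℂ :=
  ∑ i, starRingEnd ℂ (x i) * y i

/-- (I ⊗ M) acting on a vector of ℂ⁴ ⊗ ℂ², in coordinates. -/
noncomputable def IL (M : Matrix (Fin 2) (Fin 2) ℂ) (x : Fin 4 × Fin 2 → ℂ) :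
    Fin 4 × Fin 2 → ℂ :=
  fun p => ∑ j, M p.2 j * x (p.1, j)

/-- Ψ_l = (1/√2)(ξ_{2(l-1)} ⊗ |0⟩ + ξ_{2l-1} ⊗ |1⟩) in coordinates,
for a family ξ indexed by Fin 4 and l ∈ Fin 2 (zero-based). -/
noncomputable def PsiL (ξ : Fin 4 → (Fin 4 → ℂ)) (l : Fin 2) :
    Fin 4 × Fin 2 → ℂ :=
  fun p => (Real.sqrt 2 : ℂ)⁻¹ *
    ξ (⟨2 * l.val + p.2.val, by have h1 := l.isLt; have h2 := p.2.isLt; omega⟩) p.1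


lemma key (ξ : Fin 4 → (Fin 4 → ℂ)) (A B : Matrix (Fin 2) (Fin 2) ℂ) (l l' : Fin 2) :
    inn (IL A (PsiL ξ l)) (IL B (PsiL ξ l')) =
    (2:ℂ)⁻¹ * ∑ m : Fin 2, ∑ j : Fin 2, ∑ j' : Fin 2,
      starRingEnd ℂ (A m j) * B m j' *
        inn (ξ ⟨2*l.val+j.val, by omega⟩) (ξ ⟨2*l'.val+j'.val, by omega⟩) := by
  have hc : starRingEnd ℂ ((Real.sqrt 2 : ℂ)⁻¹) * (Real.sqrt 2 : ℂ)⁻¹ = (2:ℂ)⁻¹ := by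
    have h2 : (Real.sqrt 2) * Real.sqrt 2 = 2 := Real.mul_self_sqrt (by norm_num)
    rw [map_inv₀, Complex.conj_ofReal, ← mul_inv, ← Complex.ofReal_mul, h2]
    norm_num
  calc inn (IL A (PsiL ξ l)) (IL B (PsiL ξ l'))
      = ∑ m : Fin 2, ∑ j : Fin 2, ∑ j' : Fin 2, ∑ i : Fin 4,
          (starRingEnd ℂ ((Real.sqrt 2 : ℂ)⁻¹) * (Real.sqrt 2 : ℂ)⁻¹) *
          (starRingEnd ℂ (A m j) * B m j' *
            (starRingEnd ℂ (ξ ⟨2*l.val+j.val, by omega⟩ i) * ξ ⟨2*l'.val+j'.val, by omega⟩ i)) := by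
        simp only [inn, IL, PsiL, Fintype.sum_prod_type]
        rw [Finset.sum_comm]
        refine Finset.sum_congr rfl fun m _ => ?_
        simp only [map_sum, _root_.map_mul, Finset.sum_mul_sum]
        rw [Finset.sum_comm]
        refine Finset.sum_congr rfl fun j _ => ?_
        rw [Finset.sum_comm]
        refine Finset.sum_congr rfl fun j' _ => Finset.sum_congr rfl fun i _ => ?_
        ring
    _ = _ := by
        rw [hc, Finset.mul_sum]
        refine Finset.sum_congr rfl fun m _ => ?_
        rw [Finset.mul_sum]
        refine Finset.sum_congr rfl fun j _ => ?_
        rw [Finset.mul_sum]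
        refine Finset.sum_congr rfl fun j' _ => ?_
        simp only [inn, Finset.mul_sum]

set_option maxHeartbeats 1000000 in
theorem code_vectors_orthogonal
    (ξ : Fin 4 → (Fin 4 → ℂ))
    (hξ : ∀ a b, inn (ξ a) (ξ b) = if a = b then 1 else 0)
    (k k' : Fin 4) (l l' : Fin 2) :
    inn (IL (L k) (PsiL ξ l)) (IL (L k') (PsiL ξ l'))
      = if k = k' ∧ l = l' then (1/4 : ℂ) else 0 := by
  rw [key ξ (L k) (L k') l l']
  simp only [hξ]
  fin_cases k <;> fin_cases k' <;> fin_cases l <;> fin_cases l' <;>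
  · simp [L, Fin.sum_univ_two, Fin.mk.injEq, Fin.val_natCast, map_sub, map_add,
      Complex.conj_I, map_ofNat]
    try ring_nf
    try norm_num [Complex.ext_iff, Fin.ext_iff, Fin.val_natCast]
    try (rw [if_neg (by decide)]; norm_num)
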